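/- Let α, δ, l, f > 0 and define h(x) := (x+α)(x+δ)/(1 - e^{-(x+δ)l/f}) for x ≥ 0. If e^{δl/f} - 1 - (l/f)·αδ/(α+δ) ≥ 0, then h is strictly increasing on [0,∞). -/

import Mathlib

/-- if `e^{δl/f} - 1 - (l/f)αδ/(α+δ) ≥ 0` then
`h(x) = (x+α)(x+δ)/(1 - e^{-(x+δ)l/f})` is strictly increasing on `[0,∞)`. -/
theorem h_strictMono (α δ l f : ℝ)
    (hα : 0 < α) (hδ : 0 < δ) (hl : 0 < l) (hf : 0 < f)
    (hcond : 0 ≤ Real.exp (δ * l / f) - 1 - (l / f) * (α * δ) / (α + δ))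
    (h : ℝ → ℝ)
    (hh : h = fun x => (x + α) * (x + δ) / (1 - Real.exp (-(x + δ) * l / f))) :
    StrictMonoOn h (Set.Ici 0) := by
  have hc : 0 < l / f := div_pos hl hf
  have hDpos : ∀ x ∈ Set.Ici (0:ℝ), 0 < 1 - Real.exp (-(x + δ) * l / f) := by
    intro x hx
    have hx0 : (0:ℝ) ≤ x := hx
    have hneg : -(x + δ) * l / f < 0 := by
      apply div_neg_of_neg_of_pos _ hf
      nlinarith
    have := Real.exp_lt_one_iff.mpr hneg
    linarith
  apply strictMonoOn_of_deriv_pos (convex_Ici 0)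
  · rw [hh]
    apply ContinuousOn.div
    · fun_prop
    · fun_prop
    · intro x hx
      exact (hDpos x hx).ne'
  · intro x hx
    rw [interior_Ici] at hx
    have hx0 : 0 < x := hx
    have hxI : x ∈ Set.Ici (0:ℝ) := le_of_lt hx0
    have hD := hDpos x hxI
    -- the derivative of the numerator
    have hN : HasDerivAt (fun y : ℝ => (y + α) * (y + δ)) (2*x + α + δ) x := by
      have h1 : HasDerivAt (fun y : ℝ => (y + α) * (y + δ))
          (1 * (x + δ) + (x + α) * 1) x :=
        ((hasDerivAt_id x).add_const α).mul ((hasDerivAt_id x).add_const δ)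
      convert h1 using 1; ring
    -- the derivative of the denominator
    have hu : HasDerivAt (fun y : ℝ => -(y + δ) * l / f) (-(l / f)) x := by
      have h1 : HasDerivAt (fun y : ℝ => -(y + δ) * l / f)
          ((-1) * l / f) x := by
        exact (((hasDerivAt_id x).add_const δ).neg.mul_const l).div_const f
      convert h1 using 1; ring
    have hE : HasDerivAt (fun y : ℝ => 1 - Real.exp (-(y + δ) * l / f))
        (Real.exp (-(x + δ) * l / f) * (l / f)) x := by
      have h1 : HasDerivAt (fun y : ℝ => 1 - Real.exp (-(y + δ) * l / f))
          (-(Real.exp (-(x + δ) * l / f) * -(l / f))) x := (hu.exp).const_sub 1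
      convert h1 using 1; ring
    have hder : HasDerivAt h
        (((2*x + α + δ) * (1 - Real.exp (-(x + δ) * l / f))
          - (x + α) * (x + δ) * (Real.exp (-(x + δ) * l / f) * (l / f)))
          / (1 - Real.exp (-(x + δ) * l / f))^2) x := by
      rw [hh]
      exact hN.div hE hD.ne'
    rw [hder.deriv]
    apply div_pos _ (by positivity)
    -- key inequality
    have hc' : 0 < l / f := hc
    have hE0 : 0 < Real.exp (-(x + δ) * l / f) := Real.exp_pos _
    have hEE : Real.exp (-(x + δ) * l / f) * Real.exp ((x + δ) * (l / f)) = 1 := by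
      rw [← Real.exp_add]; rw [show -(x + δ) * l / f + (x + δ) * (l / f) = 0 by ring]
      exact Real.exp_zero
    have key : (2*x + α + δ) * (Real.exp ((x + δ) * (l / f)) - 1)
        > (l / f) * ((x + α) * (x + δ)) := by
      have hxc : Real.exp (x * (l / f)) > 1 + x * (l / f) := by
        have := Real.add_one_lt_exp (by positivity : x * (l / f) ≠ 0)
        linarith
      have hδc : Real.exp (δ * (l / f)) ≥ 1 + (l / f) * (α * δ) / (α + δ) := by
        have : δ * (l / f) = δ * l / f := by ring
        rw [this]; linarith
      have hsplit : Real.exp ((x + δ) * (l / f))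
          = Real.exp (δ * (l / f)) * Real.exp (x * (l / f)) := by
        rw [← Real.exp_add]; ring_nf
      set A : ℝ := (l / f) * (α * δ) / (α + δ) with hAdef
      have hA0 : 0 < A := by positivity
      have hAeq : A * (α + δ) = (l / f) * (α * δ) := by
        rw [hAdef, div_mul_cancel₀ _ (by positivity : (α + δ) ≠ 0)]
      have hstep1 : Real.exp ((x + δ) * (l / f)) > (1 + A) * (1 + x * (l / f)) := by
        rw [hsplit]
        have h1 : Real.exp (δ * (l / f)) * Real.exp (x * (l / f))
            > Real.exp (δ * (l / f)) * (1 + x * (l / f)) :=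
          mul_lt_mul_of_pos_left hxc (Real.exp_pos _)
        have h2 : Real.exp (δ * (l / f)) * (1 + x * (l / f))
            ≥ (1 + A) * (1 + x * (l / f)) := by
          apply mul_le_mul_of_nonneg_right hδc (by positivity)
        linarith
      -- so exp((x+δ)c) - 1 > A + x c
      have hstep2 : Real.exp ((x + δ) * (l / f)) - 1 > A + x * (l / f) := by
        nlinarith [mul_pos hA0 (mul_pos hx0 hc)]
      -- polynomial inequality: (2x+α+δ)(A + xc) ≥ c(x+α)(x+δ)
      have hpoly : (2*x + α + δ) * (A + x * (l / f)) ≥ (l / f) * ((x + α) * (x + δ)) := by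
        have hαδ : 0 < α + δ := by linarith
        rw [ge_iff_le, ← sub_nonneg]
        have heq : ((2*x + α + δ) * (A + x * (l / f)) - (l / f) * ((x + α) * (x + δ)))
            * (α + δ)
            = (l / f) * (x^2 * (α + δ) + 2 * α * δ * x) := by
          linear_combination (2*x + α + δ) * hAeq
        nlinarith [heq, mul_pos hc (mul_pos hx0 hx0), mul_pos hc hx0, hαδ]
      nlinarith [mul_pos (by linarith : (0:ℝ) < 2*x + α + δ) hc]
    -- transfer via multiplying by E
    have h1 := mul_lt_mul_of_pos_left key hE0
    have goalEq : (2*x + α + δ) * (1 - Real.exp (-(x + δ) * l / f))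
          - (x + α) * (x + δ) * (Real.exp (-(x + δ) * l / f) * (l / f))
        = Real.exp (-(x + δ) * l / f)
            * ((2*x + α + δ) * (Real.exp ((x + δ) * (l / f)) - 1))
          - Real.exp (-(x + δ) * l / f)
            * ((l / f) * ((x + α) * (x + δ))) := by
      linear_combination (-(2*x + α + δ)) * hEE
    rw [goalEq]
    linarith
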